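/- Let P be a finite set of points in ℝ² that is not contained in a single line, let p ∈ P, and suppose that every line that contains p and at least one other point of P contains at least three points of P. Then P spans an ordinary line that does not contain p. -/

import Mathlib

/-- A line in `ℝ²`: an affine subspace whose direction has dimension 1. -/
def IsLine2 (L : AffineSubspace ℝ (Fin 2 → ℝ)) : Prop :=
  Module.finrank ℝ L.direction = 1

/-- The ordinary lines of a point set: lines containing exactly two points of the set. -/
def ordinaryLines2 (P : Set (Fin 2 → ℝ)) : Set (AffineSubspace ℝ (Fin 2 → ℝ)) :=
  {L | IsLine2 L ∧ (P ∩ ↑L).ncard = 2}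

namespace SG14

noncomputable section

/-- 2D cross product (determinant). -/
def dd (u v : Fin 2 → ℝ) : ℝ := u 0 * v 1 - u 1 * v 0

/-- dot product. -/
def ip (u v : Fin 2 → ℝ) : ℝ := u 0 * v 0 + u 1 * v 1

/-- squared distance from `x` to the line through `a, b`. -/
def DD (x a b : Fin 2 → ℝ) : ℝ := (dd (a - x) (b - x))^2 / ip (b - a) (b - a)

lemma ne_zero_iff {v : Fin 2 → ℝ} : v ≠ 0 ↔ v 0 ≠ 0 ∨ v 1 ≠ 0 := by
  constructor
  · intro h
    by_contra hc
    push_neg at hc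
    exact h (funext fun i => by fin_cases i <;> simp [hc.1, hc.2])
  · rintro (h | h) hv <;> simp [hv] at h

lemma ip_pos {v : Fin 2 → ℝ} (hv : v ≠ 0) : 0 < ip v v := by
  rcases ne_zero_iff.mp hv with h | h <;>
  · unfold ip
    nlinarith [mul_self_pos.mpr h, mul_self_nonneg (v 0), mul_self_nonneg (v 1)]

lemma mem_line_iff {a b x : Fin 2 → ℝ} :
    x ∈ affineSpan ℝ ({a, b} : Set (Fin 2 → ℝ)) ↔ ∃ t : ℝ, x - a = t • (b - a) := by
  have : x = (x - a) +ᵥ a := by simp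
  rw [this, vadd_left_mem_affineSpan_pair]
  simp [eq_comm]

lemma isLine2_span {a b : Fin 2 → ℝ} (hab : a ≠ b) :
    IsLine2 (affineSpan ℝ ({a, b} : Set (Fin 2 → ℝ))) := by
  unfold IsLine2
  rw [direction_affineSpan, vectorSpan_pair]
  exact finrank_span_singleton (by simpa [sub_eq_zero] using hab)

lemma dd_ne_zero_of_not_mem {a b x : Fin 2 → ℝ} (hab : a ≠ b)
    (hx : x ∉ affineSpan ℝ ({a, b} : Set (Fin 2 → ℝ))) : dd (x - a) (b - a) ≠ 0 := by
  intro hdd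
  apply hx
  rw [mem_line_iff]
  have hw : b - a ≠ 0 := by simpa [sub_eq_zero] using (Ne.symm hab)
  simp only [dd, Pi.sub_apply] at hdd
  rcases ne_zero_iff.mp hw with h | h <;> simp only [Pi.sub_apply] at h
  · refine ⟨(x 0 - a 0) / (b 0 - a 0), funext fun i => ?_⟩
    fin_cases i <;> simp only [Pi.sub_apply, Pi.smul_apply, smul_eq_mul, Fin.zero_eta, Fin.mk_one] <;> field_simp <;>
      first
        | ring1
        | linear_combination hdd
        | linear_combination -hdd
        | linear_combination (b 0 - a 0) * hdd
        | linear_combination -(b 0 - a 0) * hdd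
  · refine ⟨(x 1 - a 1) / (b 1 - a 1), funext fun i => ?_⟩
    fin_cases i <;> simp only [Pi.sub_apply, Pi.smul_apply, smul_eq_mul, Fin.zero_eta, Fin.mk_one] <;> field_simp <;>
      first
        | ring1
        | linear_combination hdd
        | linear_combination -hdd
        | linear_combination (b 1 - a 1) * hdd
        | linear_combination -(b 1 - a 1) * hdd

/-- pigeonhole on three distinct reals: two are on the same side of `t0`,
ordered by distance to `t0`. -/
lemma pigeon (u v w t0 : ℝ) (huv : u ≠ v) (huw : u ≠ w) (hvw : v ≠ w) :
    ∃ t1 t2 : ℝ, (t1 = u ∨ t1 = v ∨ t1 = w) ∧ (t2 = u ∨ t2 = v ∨ t2 = w) ∧ t1 ≠ t2 ∧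
      0 ≤ (t1 - t0) * (t2 - t0) ∧ (t1 - t0)^2 ≤ (t2 - t0)^2 := by
  have pair : ∀ a b : ℝ, a ≠ b → 0 ≤ (a - t0) * (b - t0) →
      ∃ t1 t2 : ℝ, ((t1 = a ∧ t2 = b) ∨ (t1 = b ∧ t2 = a)) ∧ t1 ≠ t2 ∧
        0 ≤ (t1 - t0) * (t2 - t0) ∧ (t1 - t0)^2 ≤ (t2 - t0)^2 := by
    intro a b hab hsgn
    rcases le_total ((a - t0)^2) ((b - t0)^2) with hle | hle
    · exact ⟨a, b, Or.inl ⟨rfl, rfl⟩, hab, hsgn, hle⟩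
    · exact ⟨b, a, Or.inr ⟨rfl, rfl⟩, hab.symm, by nlinarith, hle⟩
  rcases le_total (u - t0) 0 with h1 | h1 <;> rcases le_total (v - t0) 0 with h2 | h2 <;>
    rcases le_total (w - t0) 0 with h3 | h3
  · obtain ⟨t1, t2, hmem, h⟩ := pair u v huv (by nlinarith)
    exact ⟨t1, t2, by tauto, by tauto, by tauto, by tauto⟩
  · obtain ⟨t1, t2, hmem, h⟩ := pair u v huv (by nlinarith)
    exact ⟨t1, t2, by tauto, by tauto, by tauto, by tauto⟩
  · obtain ⟨t1, t2, hmem, h⟩ := pair u w huw (by nlinarith)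
    exact ⟨t1, t2, by tauto, by tauto, by tauto, by tauto⟩
  · obtain ⟨t1, t2, hmem, h⟩ := pair v w hvw (by nlinarith)
    exact ⟨t1, t2, by tauto, by tauto, by tauto, by tauto⟩
  · obtain ⟨t1, t2, hmem, h⟩ := pair v w hvw (by nlinarith)
    exact ⟨t1, t2, by tauto, by tauto, by tauto, by tauto⟩
  · obtain ⟨t1, t2, hmem, h⟩ := pair u w huw (by nlinarith)
    exact ⟨t1, t2, by tauto, by tauto, by tauto, by tauto⟩
  · obtain ⟨t1, t2, hmem, h⟩ := pair u v huv (by nlinarith)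
    exact ⟨t1, t2, by tauto, by tauto, by tauto, by tauto⟩
  · obtain ⟨t1, t2, hmem, h⟩ := pair u v huv (by nlinarith)
    exact ⟨t1, t2, by tauto, by tauto, by tauto, by tauto⟩

/-- Kelly's key step. -/
lemma key {x a b c : Fin 2 → ℝ} (hab : a ≠ b) (hca : c ≠ a) (hcb : c ≠ b)
    (hx : x ∉ affineSpan ℝ ({a, b} : Set (Fin 2 → ℝ)))
    (hc : c ∈ affineSpan ℝ ({a, b} : Set (Fin 2 → ℝ))) :
    ∃ y1 y2 : Fin 2 → ℝ, (y1 = a ∨ y1 = b ∨ y1 = c) ∧ (y2 = a ∨ y2 = b ∨ y2 = c) ∧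
      x ≠ y2 ∧ y1 ∉ affineSpan ℝ ({x, y2} : Set (Fin 2 → ℝ)) ∧ DD y1 x y2 < DD x a b := by
  set w : Fin 2 → ℝ := b - a with hw
  have hwne : w ≠ 0 := by simpa [hw, sub_eq_zero] using (Ne.symm hab)
  have hW : 0 < ip w w := ip_pos hwne
  obtain ⟨s, hs⟩ := mem_line_iff.mp hc
  have hs0 : s ≠ 0 := by
    rintro rfl; apply hca; have := hs; simpa [sub_eq_zero] using this
  have hs1 : s ≠ 1 := by
    rintro rfl; apply hcb
    have : c - b = 0 := by
      have := hs; rw [one_smul] at this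
      have h2 : c - a - (b - a) = 0 := by rw [this]; simp [hw]
      simpa [sub_sub_sub_cancel_right] using h2
    simpa [sub_eq_zero] using this
  have h0 : dd (x - a) w ≠ 0 := dd_ne_zero_of_not_mem hab hx
  set W : ℝ := ip w w with hWdef
  set I : ℝ := ip (x - a) w with hIdef
  set t0 : ℝ := I / W with ht0
  obtain ⟨t1, t2, hm1, hm2, h12, hsgn, hord⟩ := pigeon 0 1 s t0 (by norm_num)
    (Ne.symm hs0) (Ne.symm hs1)
  -- the map t ↦ t • w + a
  set φ : ℝ → (Fin 2 → ℝ) := fun t => t • w + a with hφ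
  have hφa : φ 0 = a := by simp [hφ]
  have hφb : φ 1 = b := by simp [hφ, hw]
  have hφc : φ s = c := by
    have : c = s • w + a := by rw [← hs]; abel
    simp [hφ, ← this]
  set y1 : Fin 2 → ℝ := φ t1 with hy1
  set y2 : Fin 2 → ℝ := φ t2 with hy2
  have hm1' : y1 = a ∨ y1 = b ∨ y1 = c := by
    rcases hm1 with h | h | h <;> rw [hy1, h] <;>
      [exact Or.inl hφa; exact Or.inr (Or.inl hφb); exact Or.inr (Or.inr hφc)]
  have hm2' : y2 = a ∨ y2 = b ∨ y2 = c := by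
    rcases hm2 with h | h | h <;> rw [hy2, h] <;>
      [exact Or.inl hφa; exact Or.inr (Or.inl hφb); exact Or.inr (Or.inr hφc)]
  -- coordinate computations
  have hdd1 : dd (x - y1) (y2 - y1) = (t2 - t1) * dd (x - a) w := by
    simp only [hy1, hy2, hφ, dd, Pi.sub_apply, Pi.add_apply, Pi.smul_apply, smul_eq_mul]
    ring
  have hddx : dd (a - x) (b - x) = - dd (x - a) w := by
    simp only [dd, hw, Pi.sub_apply]; ring
  have hdenom : ip (y2 - x) (y2 - x) * W = (dd (x - a) w)^2 + (t2 * W - I)^2 := by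
    simp only [hy2, hφ, ip, dd, hWdef, hIdef, Pi.sub_apply, Pi.add_apply, Pi.smul_apply,
      smul_eq_mul]
    ring
  have hxy2 : x ≠ y2 := by
    intro hxe
    apply h0
    have : x - a = t2 • w := by rw [hxe, hy2]; simp [hφ]
    rw [this]
    simp only [dd, Pi.smul_apply, smul_eq_mul]; ring
  have hD2 : 0 < ip (y2 - x) (y2 - x) := ip_pos (sub_ne_zero.mpr (Ne.symm hxy2))
  have hnm : y1 ∉ affineSpan ℝ ({x, y2} : Set (Fin 2 → ℝ)) := by
    intro hmem
    obtain ⟨r, hr⟩ := mem_line_iff.mp hmem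
    have : dd (y1 - x) (y2 - x) = 0 := by
      rw [hr]; simp only [dd, Pi.smul_apply, Pi.sub_apply, smul_eq_mul]; ring
    have h2 : dd (x - y1) (y2 - y1) = dd (y1 - x) (y2 - x) * (-1) := by
      simp only [dd, Pi.sub_apply]; ring
    rw [this] at h2
    rw [hdd1] at h2
    rcases mul_eq_zero.mp (by linarith : (t2 - t1) * dd (x - a) w = 0) with h' | h'
    · exact h12 (sub_eq_zero.mp h').symm
    · exact h0 h'
  refine ⟨y1, y2, hm1', hm2', hxy2, hnm, ?_⟩
  -- final inequality
  unfold DD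
  rw [hdd1, hddx]
  have ht2 : (t2 * W - I)^2 = (t2 - t0)^2 * W^2 := by
    rw [ht0]; field_simp
  have hord2 : (t2 - t1)^2 ≤ (t2 - t0)^2 := by nlinarith [hsgn, hord]
  rw [div_lt_div_iff₀ hD2 (by simpa [hw] using hW)]
  have hWW : ip (b - a) (b - a) = W := by rw [hWdef, hw]
  rw [hWW]
  have h0sq : 0 < (dd (x - a) w)^2 := by positivity
  nlinarith [hdenom, ht2, hord2, h0sq, hW, sq_nonneg (t2*W - I), mul_pos hD2 hW,
    mul_le_mul_of_nonneg_left hord2 (le_of_lt h0sq)]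

end

end SG14

theorem statement14 (P : Finset (Fin 2 → ℝ)) (p : Fin 2 → ℝ) (hp : p ∈ P)
    (h : ¬ Collinear ℝ (↑P : Set (Fin 2 → ℝ)))
    (h3 : ∀ L : AffineSubspace ℝ (Fin 2 → ℝ), IsLine2 L → p ∈ L →
      (∃ q ∈ P, q ≠ p ∧ q ∈ L) → 3 ≤ ((↑P : Set (Fin 2 → ℝ)) ∩ ↑L).ncard) :
    ∃ L : AffineSubspace ℝ (Fin 2 → ℝ), L ∈ ordinaryLines2 ↑P ∧ p ∉ L := by
  classical
  -- there is a triple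
  have hex : ∃ q : (Fin 2 → ℝ) × (Fin 2 → ℝ) × (Fin 2 → ℝ), q.1 ∈ P ∧ q.2.1 ∈ P ∧ q.2.2 ∈ P ∧
      q.2.1 ≠ q.2.2 ∧ q.1 ∉ affineSpan ℝ ({q.2.1, q.2.2} : Set (Fin 2 → ℝ)) := by
    by_contra hc
    push_neg at hc
    apply h
    by_cases hsub : (↑P : Set (Fin 2 → ℝ)).Subsingleton
    · rcases hsub.eq_empty_or_singleton with he | ⟨q, he⟩ <;> rw [he]
      · exact collinear_empty ℝ _
      · exact collinear_singleton ℝ q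
    · rw [Set.not_subsingleton_iff] at hsub
      obtain ⟨a, ha, b, hb, hab⟩ := hsub
      rw [collinear_iff_of_mem ha]
      refine ⟨b - a, fun x hx => ?_⟩
      have hmem : x ∈ affineSpan ℝ ({a, b} : Set (Fin 2 → ℝ)) :=
        hc ⟨x, a, b⟩ (Finset.mem_coe.mp hx) (Finset.mem_coe.mp ha) (Finset.mem_coe.mp hb) hab
      obtain ⟨t, ht⟩ := SG14.mem_line_iff.mp hmem
      exact ⟨t, by rw [← ht]; simp⟩
  -- minimize DD
  set S : Finset ((Fin 2 → ℝ) × (Fin 2 → ℝ) × (Fin 2 → ℝ)) :=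
    (P ×ˢ P ×ˢ P).filter (fun q => q.2.1 ≠ q.2.2 ∧
      q.1 ∉ affineSpan ℝ ({q.2.1, q.2.2} : Set (Fin 2 → ℝ))) with hS
  have hSne : S.Nonempty := by
    obtain ⟨q, h1, h2, h3', h4, h5⟩ := hex
    exact ⟨q, by simp [hS, Finset.mem_filter, Finset.mem_product, h1, h2, h3', h4, h5]⟩
  obtain ⟨q, hqS, hqmin⟩ := S.exists_min_image (fun q => SG14.DD q.1 q.2.1 q.2.2) hSne
  obtain ⟨x, a, b⟩ := q
  rw [hS, Finset.mem_filter, Finset.mem_product, Finset.mem_product] at hqS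
  obtain ⟨⟨hxP, haP, hbP⟩, hab, hxL⟩ := hqS
  refine ⟨affineSpan ℝ ({a, b} : Set (Fin 2 → ℝ)), ⟨SG14.isLine2_span hab, ?_⟩, ?_⟩
  · -- exactly two points
    have heq : (↑P : Set (Fin 2 → ℝ)) ∩ ↑(affineSpan ℝ ({a, b} : Set (Fin 2 → ℝ)))
        = {a, b} := by
      apply Set.Subset.antisymm
      · rintro c ⟨hcP, hcL⟩
        by_contra hcm
        simp only [Set.mem_insert_iff, Set.mem_singleton_iff, not_or] at hcm
        obtain ⟨y1, y2, hm1, hm2, hxy2, hnm, hlt⟩ :=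
          SG14.key hab hcm.1 hcm.2 hxL hcL
        have hy1P : y1 ∈ P := by rcases hm1 with h' | h' | h' <;> rw [h'] <;> assumption
        have hy2P : y2 ∈ P := by rcases hm2 with h' | h' | h' <;> rw [h'] <;> assumption
        have hmem : (⟨y1, x, y2⟩ : (Fin 2 → ℝ) × (Fin 2 → ℝ) × (Fin 2 → ℝ)) ∈ S := by
          simp [hS, Finset.mem_filter, Finset.mem_product, hy1P, hxP, hy2P, hxy2, hnm]
        have := hqmin _ hmem
        simp only at this
        linarith
      · rintro c (rfl | rfl)
        · exact ⟨haP, subset_affineSpan ℝ _ (by simp)⟩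
        · exact ⟨hbP, subset_affineSpan ℝ _ (by simp)⟩
    rw [heq, Set.ncard_pair hab]
  · -- p not on the line
    intro hpL
    have h2 : ((↑P : Set (Fin 2 → ℝ)) ∩ ↑(affineSpan ℝ ({a, b} : Set (Fin 2 → ℝ)))).ncard = 2 := by
      have heq : (↑P : Set (Fin 2 → ℝ)) ∩ ↑(affineSpan ℝ ({a, b} : Set (Fin 2 → ℝ)))
          = {a, b} := by
        apply Set.Subset.antisymm
        · rintro c ⟨hcP, hcL⟩
          by_contra hcm
          simp only [Set.mem_insert_iff, Set.mem_singleton_iff, not_or] at hcm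
          obtain ⟨y1, y2, hm1, hm2, hxy2, hnm, hlt⟩ :=
            SG14.key hab hcm.1 hcm.2 hxL hcL
          have hy1P : y1 ∈ P := by rcases hm1 with h' | h' | h' <;> rw [h'] <;> assumption
          have hy2P : y2 ∈ P := by rcases hm2 with h' | h' | h' <;> rw [h'] <;> assumption
          have hmem : (⟨y1, x, y2⟩ : (Fin 2 → ℝ) × (Fin 2 → ℝ) × (Fin 2 → ℝ)) ∈ S := by
            simp [hS, Finset.mem_filter, Finset.mem_product, hy1P, hxP, hy2P, hxy2, hnm]
          have := hqmin _ hmem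
          simp only at this
          linarith
        · rintro c (rfl | rfl)
          · exact ⟨haP, subset_affineSpan ℝ _ (by simp)⟩
          · exact ⟨hbP, subset_affineSpan ℝ _ (by simp)⟩
      rw [heq, Set.ncard_pair hab]
    -- pick a point of {a,b} different from p
    have hq : ∃ q ∈ P, q ≠ p ∧ q ∈ affineSpan ℝ ({a, b} : Set (Fin 2 → ℝ)) := by
      by_cases hap : a = p
      · exact ⟨b, hbP, fun hbp => hab (by rw [hap, hbp]), subset_affineSpan ℝ _ (by simp)⟩
      · exact ⟨a, haP, hap, subset_affineSpan ℝ _ (by simp)⟩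
    have hab' : a ≠ b := hab
    have := h3 (affineSpan ℝ ({a, b} : Set (Fin 2 → ℝ))) (SG14.isLine2_span hab') hpL hq
    omega
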